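/- If a QSO V has some coefficient P_{i_0 j_0, k_0} strictly between 0 and 1, then V is not an extreme point of the convex set of QSOs: V can be written as a nontrivial convex combination αV_1 + (1−α)V_2 of two distinct QSOs V_1 ≠ V_2, and moreover the combination preserves the zero-pattern of coefficients (P_{ij,k} = 0 iff P^{(1)}_{ij,k} = 0 and P^{(2)}_{ij,k} = 0). -/

import Mathlib

/-- The cubic matrix `P` defines a quadratic stochastic operator. -/
def IsQSO (m : ℕ) (P : Fin m → Fin m → Fin m → ℝ) : Prop :=
  (∀ i j k, 0 ≤ P i j k) ∧ (∀ i j k, P i j k = P j i k) ∧ (∀ i j, ∑ k, P i j k = 1)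

/-- a QSO having a coefficient strictly between 0 and 1 is not an
extreme point of the convex set of QSOs; it is a nontrivial convex combination of
two distinct QSOs preserving the zero-pattern. -/
theorem qso_not_extreme_of_interior_coeff (m : ℕ)
    (P : Fin m → Fin m → Fin m → ℝ) (hP : IsQSO m P)
    (i₀ j₀ k₀ : Fin m) (h0 : 0 < P i₀ j₀ k₀) (h1 : P i₀ j₀ k₀ < 1) :
    ∃ (P₁ P₂ : Fin m → Fin m → Fin m → ℝ) (α : ℝ),
      0 < α ∧ α < 1 ∧ IsQSO m P₁ ∧ IsQSO m P₂ ∧ P₁ ≠ P₂ ∧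
      (∀ i j k, P i j k = α * P₁ i j k + (1 - α) * P₂ i j k) ∧
      (∀ i j k, P i j k = 0 ↔ (P₁ i j k = 0 ∧ P₂ i j k = 0)) := by
  obtain ⟨hnn, hsym, hsum⟩ := hP
  -- find another index k₁ ≠ k₀ with positive coefficient
  have hex : ∃ k₁, k₁ ≠ k₀ ∧ 0 < P i₀ j₀ k₁ := by
    by_contra h
    push_neg at h
    have hz : ∀ k, k ≠ k₀ → P i₀ j₀ k = 0 := fun k hk => le_antisymm (h k hk) (hnn i₀ j₀ k)
    have hsum1 := hsum i₀ j₀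
    rw [Finset.sum_eq_single k₀ (fun k _ hk => hz k hk)
      (fun h' => absurd (Finset.mem_univ k₀) h')] at hsum1
    linarith
  obtain ⟨k₁, hk₁ne, hk₁pos⟩ := hex
  set ε : ℝ := min (P i₀ j₀ k₀) (P i₀ j₀ k₁) / 2 with hε
  have hεpos : 0 < ε := by positivity
  have hmin : 0 < min (P i₀ j₀ k₀) (P i₀ j₀ k₁) := lt_min h0 hk₁pos
  have hεlt0 : ε < P i₀ j₀ k₀ := by
    have := min_le_left (P i₀ j₀ k₀) (P i₀ j₀ k₁); rw [hε]; linarith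
  have hεlt1 : ε < P i₀ j₀ k₁ := by
    have := min_le_right (P i₀ j₀ k₀) (P i₀ j₀ k₁); rw [hε]; linarith
  set D : Fin m → Fin m → Fin m → ℝ := fun i j k =>
    if (i = i₀ ∧ j = j₀) ∨ (i = j₀ ∧ j = i₀) then
      (if k = k₀ then ε else if k = k₁ then -ε else 0) else 0 with hD
  have hDsym : ∀ i j k, D i j k = D j i k := by
    intro i j k
    simp only [hD]
    by_cases h : (i = i₀ ∧ j = j₀) ∨ (i = j₀ ∧ j = i₀)
    · rw [if_pos h, if_pos (Or.symm (h.imp And.symm And.symm))]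
    · rw [if_neg h, if_neg (fun h' => h (Or.symm (h'.imp And.symm And.symm)))]
  have hDsum : ∀ i j, ∑ k, D i j k = 0 := by
    intro i j
    simp only [hD]
    by_cases h : (i = i₀ ∧ j = j₀) ∨ (i = j₀ ∧ j = i₀)
    · simp only [if_pos h]
      have : ∀ k : Fin m, (if k = k₀ then ε else if k = k₁ then -ε else 0)
          = (if k = k₀ then ε else 0) + (if k = k₁ then -ε else 0) := by
        intro k
        by_cases hk0 : k = k₀
        · subst hk0; simp [Ne.symm hk₁ne]
        · simp [hk0]
      rw [Finset.sum_congr rfl (fun k _ => this k), Finset.sum_add_distrib]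
      simp
    · simp [h]
  -- D vanishes wherever P vanishes, and |D| < P at modified spots
  have hDkey : ∀ i j k, D i j k ≠ 0 → ε ≤ P i j k ∧ |D i j k| ≤ ε := by
    intro i j k hne
    simp only [hD] at hne ⊢
    by_cases h : (i = i₀ ∧ j = j₀) ∨ (i = j₀ ∧ j = i₀)
    · have hPij : P i j k = P i₀ j₀ k := by
        rcases h with ⟨hi, hj⟩ | ⟨hi, hj⟩
        · rw [hi, hj]
        · rw [hi, hj, hsym]
      rw [if_pos h] at hne ⊢
      by_cases hk0 : k = k₀
      · subst hk0
        refine ⟨by rw [hPij]; linarith, ?_⟩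
        simp [abs_of_pos hεpos]
      · rw [if_neg hk0] at hne ⊢
        by_cases hk1 : k = k₁
        · subst hk1
          refine ⟨by rw [hPij]; linarith, ?_⟩
          simp [abs_of_pos hεpos]
        · simp [hk1] at hne
    · rw [if_neg h] at hne; exact absurd rfl hne
  refine ⟨fun i j k => P i j k + D i j k, fun i j k => P i j k - D i j k, 1/2,
    by norm_num, by norm_num, ?_, ?_, ?_, ?_, ?_⟩
  · refine ⟨fun i j k => ?_, fun i j k => by dsimp only; rw [hsym, hDsym], fun i j => by
      dsimp only; rw [Finset.sum_add_distrib, hsum, hDsum, add_zero]⟩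
    dsimp only
    by_cases h : D i j k = 0
    · rw [h, add_zero]; exact hnn i j k
    · obtain ⟨h1', h2'⟩ := hDkey i j k h
      have := neg_abs_le (D i j k)
      linarith
  · refine ⟨fun i j k => ?_, fun i j k => by dsimp only; rw [hsym, hDsym], fun i j => by
      dsimp only; rw [Finset.sum_sub_distrib, hsum, hDsum, sub_zero]⟩
    dsimp only
    by_cases h : D i j k = 0
    · rw [h, sub_zero]; exact hnn i j k
    · obtain ⟨h1', h2'⟩ := hDkey i j k h
      have := le_abs_self (D i j k)
      linarith
  · intro heq
    have := congrFun (congrFun (congrFun heq i₀) j₀) k₀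
    have hD0 : D i₀ j₀ k₀ = ε := by simp [hD]
    rw [hD0] at this
    linarith
  · intro i j k; dsimp only; ring
  · intro i j k
    dsimp only
    constructor
    · intro hz
      have hDz : D i j k = 0 := by
        by_contra h
        obtain ⟨h1', _⟩ := hDkey i j k h
        rw [hz] at h1'
        linarith
      rw [hz, hDz]
      norm_num
    · rintro ⟨ha, hb⟩
      linarith
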